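/- Fix p ∈ ℕ, f ∈ C_p and h > 0, and define the Steklov mean f_h(x) = (4/h²) ∫_0^{h/2} ∫_0^{h/2} [2f(x+s+t) − f(x+2(s+t))] ds dt for x ≥ 0. Then f_h is twice differentiable, its second derivative satisfies f_h''(x) = (1/h²)(8·Δ_{h/2}² f(x) − Δ_h² f(x)) for all x ≥ 0, and consequently ‖f_h''‖_p ≤ (9/h²)·ω_p²(f; h). -/

import Mathlib

open MeasureTheory Set

/-- The Gamma-type operator `M_{n,k}(f;x)`. -/
noncomputable def Mnk (n k : ℕ) (f : ℝ → ℝ) (x : ℝ) : ℝ :=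
  (((2 * n - k + 1).factorial : ℝ) * x ^ (n + 1) /
      ((n.factorial : ℝ) * ((n - k).factorial : ℝ))) *
    ∫ t in Ioi (0 : ℝ), t ^ (n - k) / (x + t) ^ (2 * n - k + 2) * f t

/-- The polynomial weight: `w_0 = 1`, `w_p(x) = 1/(1+x^p)` for `p ≥ 1`. -/
noncomputable def wp (p : ℕ) (x : ℝ) : ℝ := if p = 0 then 1 else 1 / (1 + x ^ p)

/-- The weighted sup-norm `‖f‖_p = sup_{x ≥ 0} w_p(x)|f(x)|`. -/
noncomputable def pNorm (p : ℕ) (f : ℝ → ℝ) : ℝ :=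
  ⨆ x : {x : ℝ // 0 ≤ x}, wp p x.val * |f x.val|

/-- Second symmetric difference `Δ_h² f`. -/
def Delta2 (h : ℝ) (f : ℝ → ℝ) (x : ℝ) : ℝ := f (x + 2 * h) - 2 * f (x + h) + f x

/-- Second weighted modulus of smoothness `ω_p²(f;δ)`. -/
noncomputable def omega2 (p : ℕ) (f : ℝ → ℝ) (δ : ℝ) : ℝ :=
  ⨆ h : {h : ℝ // 0 < h ∧ h ≤ δ}, pNorm p (Delta2 h.val f)

/-- First weighted modulus `ω_p¹(f;δ)`. -/
noncomputable def omega1 (p : ℕ) (f : ℝ → ℝ) (δ : ℝ) : ℝ :=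
  sSup {y : ℝ | ∃ t x : ℝ, 0 ≤ t ∧ 0 ≤ x ∧ |t - x| ≤ δ ∧ y = wp p x * |f t - f x|}

/-- Membership in the weighted space `C_p`: `w_p·f` is bounded and uniformly
continuous on `[0,∞)`. -/
def CpMem (p : ℕ) (f : ℝ → ℝ) : Prop :=
  (∃ B : ℝ, ∀ x ≥ (0 : ℝ), |wp p x * f x| ≤ B) ∧
    UniformContinuousOn (fun x => wp p x * f x) (Ici 0)

/-- Steklov mean `f_h`. -/
noncomputable def steklov (f : ℝ → ℝ) (h : ℝ) (x : ℝ) : ℝ :=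
  4 / h ^ 2 *
    ∫ s in (0 : ℝ)..(h / 2), ∫ t in (0 : ℝ)..(h / 2),
      (2 * f (x + s + t) - f (x + 2 * (s + t)))

/-! ### Auxiliary lemmas -/

noncomputable def prim (φ : ℝ → ℝ) (y : ℝ) : ℝ := ∫ u in (0:ℝ)..y, φ u

lemma intOn' {φ : ℝ → ℝ} (hφ : ContinuousOn φ (Ici 0)) {a b : ℝ} (ha : 0 ≤ a) (hb : 0 ≤ b) :
    IntervalIntegrable φ volume a b := by
  apply ContinuousOn.intervalIntegrable
  apply hφ.mono
  intro y hy
  rcases le_total a b with hab | hab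
  · rw [uIcc_of_le hab] at hy; exact le_trans ha hy.1
  · rw [uIcc_of_ge hab] at hy; exact le_trans hb hy.1

lemma intAff1 {φ : ℝ → ℝ} (hφ : ContinuousOn φ (Ici 0)) {a c : ℝ} (ha : 0 ≤ a) (hc : 0 ≤ c) :
    IntervalIntegrable (fun t => φ (c + t)) volume 0 a := by
  apply ContinuousOn.intervalIntegrable
  apply hφ.comp (Continuous.continuousOn (by continuity))
  intro t ht
  rw [uIcc_of_le ha] at ht
  exact add_nonneg hc ht.1

lemma intAff2 {φ : ℝ → ℝ} (hφ : ContinuousOn φ (Ici 0)) {a c : ℝ} (ha : 0 ≤ a) (hc : 0 ≤ c) :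
    IntervalIntegrable (fun t => φ (c + 2 * t)) volume 0 a := by
  apply ContinuousOn.intervalIntegrable
  apply hφ.comp (Continuous.continuousOn (by continuity))
  intro t ht
  rw [uIcc_of_le ha] at ht
  exact add_nonneg hc (by linarith [ht.1])

lemma integral_shift1 {φ : ℝ → ℝ} (hφ : ContinuousOn φ (Ici 0)) {a c : ℝ} (ha : 0 ≤ a) (hc : 0 ≤ c) :
    ∫ t in (0:ℝ)..a, φ (c + t) = prim φ (c + a) - prim φ c := by
  rw [intervalIntegral.integral_comp_add_left φ c]
  have h2 := intervalIntegral.integral_add_adjacent_intervals (a := 0) (b := c) (c := c + a)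
    (intOn' hφ le_rfl hc) (intOn' hφ hc (by linarith))
  rw [add_zero]
  unfold prim
  linarith

lemma integral_shift2 {φ : ℝ → ℝ} (hφ : ContinuousOn φ (Ici 0)) {a c : ℝ} (ha : 0 ≤ a) (hc : 0 ≤ c) :
    ∫ t in (0:ℝ)..a, φ (c + 2 * t) = (1/2) * (prim φ (c + 2 * a) - prim φ c) := by
  have e : ∫ t in (0:ℝ)..a, φ (c + 2 * t) = ∫ t in (0:ℝ)..a, φ (2 * t + c) :=
    intervalIntegral.integral_congr fun t _ => by rw [add_comm]
  rw [e, intervalIntegral.integral_comp_mul_add φ two_ne_zero c]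
  rw [show (2:ℝ) * 0 + c = c by ring, show (2:ℝ) * a + c = c + 2 * a by ring, smul_eq_mul]
  have h2 := intervalIntegral.integral_add_adjacent_intervals (a := 0) (b := c) (c := c + 2 * a)
    (intOn' hφ le_rfl hc) (intOn' hφ hc (by linarith))
  unfold prim
  linarith

lemma prim_hasDerivWithinAt {φ : ℝ → ℝ} (hφ : ContinuousOn φ (Ici 0)) {b : ℝ} (hb : 0 ≤ b) :
    HasDerivWithinAt (prim φ) (φ b) (Ici 0) b := by
  have hint : IntervalIntegrable φ volume 0 b := intOn' hφ le_rfl hb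
  rcases eq_or_lt_of_le hb with rfl | hb'
  · exact intervalIntegral.integral_hasDerivWithinAt_right (t := Ioi 0) hint
      ⟨Ici 0, Filter.mem_of_superset self_mem_nhdsWithin Ioi_subset_Ici_self,
        hφ.aestronglyMeasurable measurableSet_Ici⟩
      ((hφ 0 (mem_Ici.2 le_rfl)).mono Ioi_subset_Ici_self)
  · exact (intervalIntegral.integral_hasDerivAt_right hint
      ⟨Ioi 0, Ioi_mem_nhds hb',
        (hφ.mono Ioi_subset_Ici_self).aestronglyMeasurable measurableSet_Ioi⟩
      (hφ.continuousAt (Ici_mem_nhds hb'))).hasDerivWithinAt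

lemma shift_hasDerivWithinAt {F g : ℝ → ℝ} (hF : ∀ b ≥ (0:ℝ), HasDerivWithinAt F (g b) (Ici 0) b)
    {d x : ℝ} (hd : 0 ≤ d) (hx : 0 ≤ x) :
    HasDerivWithinAt (fun y => F (y + d)) (g (x + d)) (Ici 0) x := by
  have := (hF (x + d) (add_nonneg hx hd)).comp x
    ((hasDerivWithinAt_id x (Ici 0)).add_const d) (fun y hy => add_nonneg hy hd)
  rw [mul_one] at this
  exact this

lemma delta2_hasDerivWithinAt {F g : ℝ → ℝ} (hF : ∀ b ≥ (0:ℝ), HasDerivWithinAt F (g b) (Ici 0) b)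
    {c x : ℝ} (hc : 0 ≤ c) (hx : 0 ≤ x) :
    HasDerivWithinAt (Delta2 c F) (Delta2 c g x) (Ici 0) x := by
  unfold Delta2
  exact ((shift_hasDerivWithinAt hF (by linarith) hx).sub
    ((shift_hasDerivWithinAt hF hc hx).const_mul 2)).add (hF x hx)

lemma steklov_eq {f : ℝ → ℝ} (hf : ContinuousOn f (Ici 0)) {h : ℝ} (hh : 0 < h)
    {x : ℝ} (hx : 0 ≤ x) :
    steklov f h x = 4 / h ^ 2 *
      (2 * Delta2 (h/2) (prim (prim f)) x - (1/4) * Delta2 h (prim (prim f)) x) := by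
  have h2 : (0:ℝ) ≤ h / 2 := by positivity
  have hG : ContinuousOn (prim f) (Ici 0) := fun b hb =>
    (prim_hasDerivWithinAt hf hb).continuousWithinAt
  have inner : ∀ s, 0 ≤ s → (∫ t in (0:ℝ)..(h/2), (2 * f (x + s + t) - f (x + 2 * (s + t)))) =
      2 * prim f (x + s + h/2) - 2 * prim f (x + s)
        - (1/2) * prim f (x + 2*s + h) + (1/2) * prim f (x + 2*s) := by
    intro s hs
    have e1 : (∫ t in (0:ℝ)..(h/2), (2 * f (x + s + t) - f (x + 2 * (s + t)))) =
        ∫ t in (0:ℝ)..(h/2), (2 * f (x + s + t) - f (x + 2*s + 2*t)) :=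
      intervalIntegral.integral_congr fun t _ => by
        have e : x + 2 * (s + t) = x + 2*s + 2*t := by ring
        rw [e]
    have s1 := integral_shift1 hf (a := h/2) (c := x + s) h2 (by linarith)
    have s2 := integral_shift2 hf (a := h/2) (c := x + 2*s) h2 (by linarith)
    rw [e1, intervalIntegral.integral_sub ((intAff1 hf h2 (by linarith)).const_mul 2)
          (intAff2 hf h2 (by linarith)),
        intervalIntegral.integral_const_mul, s1, s2]
    have e2 : x + 2*s + 2*(h/2) = x + 2*s + h := by ring
    rw [e2]; ring
  have e3 : (∫ s in (0:ℝ)..(h/2), ∫ t in (0:ℝ)..(h/2),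
        (2 * f (x + s + t) - f (x + 2 * (s + t)))) =
      ∫ s in (0:ℝ)..(h/2), (2 * prim f (x + h/2 + s) - 2 * prim f (x + s)
        - (1/2) * prim f (x + h + 2*s) + (1/2) * prim f (x + 2*s)) :=
    intervalIntegral.integral_congr fun s hs => by
      rw [uIcc_of_le h2] at hs
      rw [inner s hs.1, show x + s + h/2 = x + h/2 + s by ring,
        show x + 2*s + h = x + h + 2*s by ring]
  have hA := intAff1 hG (a := h/2) (c := x + h/2) h2 (by linarith)
  have hB := intAff1 hG (a := h/2) (c := x) h2 hx
  have hC := intAff2 hG (a := h/2) (c := x + h) h2 (by linarith)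
  have hD := intAff2 hG (a := h/2) (c := x) h2 hx
  have o1 := integral_shift1 hG (a := h/2) (c := x + h/2) h2 (by linarith)
  have o2 := integral_shift1 hG (a := h/2) (c := x) h2 hx
  have o3 := integral_shift2 hG (a := h/2) (c := x + h) h2 (by linarith)
  have o4 := integral_shift2 hG (a := h/2) (c := x) h2 hx
  unfold steklov
  rw [e3,
    intervalIntegral.integral_add (((hA.const_mul 2).sub (hB.const_mul 2)).sub
      (hC.const_mul (1/2))) (hD.const_mul (1/2)),
    intervalIntegral.integral_sub ((hA.const_mul 2).sub (hB.const_mul 2)) (hC.const_mul (1/2)),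
    intervalIntegral.integral_sub (hA.const_mul 2) (hB.const_mul 2),
    intervalIntegral.integral_const_mul, intervalIntegral.integral_const_mul,
    intervalIntegral.integral_const_mul, intervalIntegral.integral_const_mul,
    o1, o2, o3, o4]
  unfold Delta2
  rw [show x + h/2 + h/2 = x + h by ring, show x + h + 2*(h/2) = x + 2*h by ring,
    show x + 2*(h/2) = x + h by ring]
  ring

lemma wp_pos {p : ℕ} {x : ℝ} (hx : 0 ≤ x) : 0 < wp p x := by
  unfold wp
  split
  · norm_num
  · have h1 : (0:ℝ) < 1 + x ^ p := by nlinarith [pow_nonneg hx p]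
    positivity

lemma wp_shift {p : ℕ} {x c : ℝ} (hx : 0 ≤ x) (hc : 0 ≤ c) :
    wp p x ≤ 2 ^ p * (1 + c ^ p) * wp p (x + c) := by
  unfold wp
  split
  · next hp => subst hp; norm_num
  · have hxp := pow_nonneg hx p
    have hcp := pow_nonneg hc p
    have h1 : (0:ℝ) < 1 + x ^ p := by linarith
    have h2 : (0:ℝ) < 1 + (x + c) ^ p := by nlinarith [pow_nonneg (add_nonneg hx hc) p]
    have hmax : (x + c) ^ p ≤ 2 ^ p * (x ^ p + c ^ p) := by
      calc (x + c) ^ p ≤ (2 * max x c) ^ p := by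
            apply pow_le_pow_left₀ (add_nonneg hx hc)
            have := le_max_left x c; have := le_max_right x c; linarith
        _ = 2 ^ p * (max x c) ^ p := mul_pow 2 _ p
        _ ≤ 2 ^ p * (x ^ p + c ^ p) := by
            apply mul_le_mul_of_nonneg_left _ (by positivity)
            rcases le_total x c with hxc | hxc
            · rw [max_eq_right hxc]; linarith
            · rw [max_eq_left hxc]; linarith
    have h2p : (1:ℝ) ≤ 2 ^ p := one_le_pow₀ (by norm_num)
    rw [mul_one_div, div_le_div_iff₀ h1 h2]
    nlinarith [mul_nonneg (mul_nonneg (by positivity : (0:ℝ) ≤ 2 ^ p) hxp) hcp]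

lemma wp_le_B {p : ℕ} {f : ℝ → ℝ} {B : ℝ} (hB : ∀ x ≥ (0:ℝ), |wp p x * f x| ≤ B)
    {x : ℝ} (hx : 0 ≤ x) : wp p x * |f x| ≤ B := by
  have := hB x hx
  rwa [abs_mul, abs_of_pos (wp_pos hx)] at this


/-- The Steklov mean is twice differentiable with
`f_h''(x) = (1/h²)(8·Δ_{h/2}²f(x) − Δ_h²f(x))` and `‖f_h''‖_p ≤ (9/h²)·ω_p²(f;h)`. -/
theorem steklov_second_derivative (p : ℕ) (f : ℝ → ℝ) (hf : CpMem p f)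
    (h : ℝ) (hh : 0 < h) :
    ∃ fh' : ℝ → ℝ,
      (∀ x ≥ (0 : ℝ), HasDerivWithinAt (steklov f h) (fh' x) (Ici 0) x) ∧
      (∀ x ≥ (0 : ℝ),
        HasDerivWithinAt fh'
          (1 / h ^ 2 * (8 * Delta2 (h / 2) f x - Delta2 h f x)) (Ici 0) x) ∧
      pNorm p (fun x => 1 / h ^ 2 * (8 * Delta2 (h / 2) f x - Delta2 h f x)) ≤
        9 / h ^ 2 * omega2 p f h := by
  obtain ⟨⟨B, hB⟩, hUC⟩ := hf
  have hcont : ContinuousOn f (Ici 0) := by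
    have h1 : ContinuousOn (fun x => wp p x * f x) (Ici 0) := hUC.continuousOn
    have h2 : ContinuousOn (fun x : ℝ => if p = 0 then (1:ℝ) else 1 + x ^ p) (Ici 0) := by
      by_cases hp : p = 0
      · simp only [hp, if_true]; exact continuousOn_const
      · simp only [hp, if_false]
        exact (continuous_const.add (continuous_pow p)).continuousOn
    apply (h1.mul h2).congr
    intro y hy
    by_cases hp : p = 0
    · simp [wp, hp]
    · have hyp : (0:ℝ) < 1 + y ^ p := by nlinarith [pow_nonneg (mem_Ici.1 hy) p]
      simp only [wp, if_neg hp]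
      field_simp
      simp only [Pi.mul_apply]
      rw [div_mul_cancel₀ _ hyp.ne']
  have hG : ∀ b ≥ (0:ℝ), HasDerivWithinAt (prim f) (f b) (Ici 0) b :=
    fun b hb => prim_hasDerivWithinAt hcont hb
  have hGcont : ContinuousOn (prim f) (Ici 0) := fun b hb => (hG b hb).continuousWithinAt
  have hH : ∀ b ≥ (0:ℝ), HasDerivWithinAt (prim (prim f)) (prim f b) (Ici 0) b :=
    fun b hb => prim_hasDerivWithinAt hGcont hb
  have h2 : (0:ℝ) ≤ h / 2 := by positivity
  refine ⟨fun x => 4 / h ^ 2 * (2 * Delta2 (h/2) (prim f) x - 1/4 * Delta2 h (prim f) x),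
    ?_, ?_, ?_⟩
  · intro x hx
    have hPhi := (((delta2_hasDerivWithinAt hH h2 hx).const_mul 2).sub
      ((delta2_hasDerivWithinAt hH hh.le hx).const_mul (1/4))).const_mul (4 / h ^ 2)
    exact hPhi.congr (fun y hy => steklov_eq hcont hh hy) (steklov_eq hcont hh hx)
  · intro x hx
    have hPsi := (((delta2_hasDerivWithinAt hG h2 hx).const_mul 2).sub
      ((delta2_hasDerivWithinAt hG hh.le hx).const_mul (1/4))).const_mul (4 / h ^ 2)
    have e : (1 / h ^ 2 * (8 * Delta2 (h / 2) f x - Delta2 h f x)) =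
        4 / h ^ 2 * (2 * Delta2 (h/2) f x - 1/4 * Delta2 h f x) := by ring
    rw [e]
    exact hPsi
  · haveI : Nonempty {x : ℝ // 0 ≤ x} := ⟨⟨0, le_rfl⟩⟩
    set M := 2 ^ p * (1 + (2*h) ^ p) * B with hM
    have hB0 : 0 ≤ B := le_trans (abs_nonneg _) (hB 0 le_rfl)
    have hMb : ∀ c x : ℝ, 0 ≤ c → c ≤ 2*h → 0 ≤ x → wp p x * |f (x + c)| ≤ M := by
      intro c x hc hch hx
      have k1 : wp p x ≤ 2 ^ p * (1 + c ^ p) * wp p (x + c) := wp_shift hx hc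
      have k2 : wp p (x + c) * |f (x + c)| ≤ B := wp_le_B hB (by linarith)
      have k3 : (0:ℝ) ≤ 2 ^ p * (1 + c ^ p) := by positivity
      calc wp p x * |f (x + c)| ≤ (2 ^ p * (1 + c ^ p) * wp p (x + c)) * |f (x + c)| :=
            mul_le_mul_of_nonneg_right k1 (abs_nonneg _)
        _ = 2 ^ p * (1 + c ^ p) * (wp p (x + c) * |f (x + c)|) := by ring
        _ ≤ 2 ^ p * (1 + c ^ p) * B := mul_le_mul_of_nonneg_left k2 k3
        _ ≤ M := by
            rw [hM]
            apply mul_le_mul_of_nonneg_right _ hB0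
            have hcc : c ^ p ≤ (2*h) ^ p := pow_le_pow_left₀ hc hch p
            nlinarith [pow_nonneg (by norm_num : (0:ℝ) ≤ 2) p]
    have hDb : ∀ c : ℝ, 0 ≤ c → c ≤ h → ∀ x : ℝ, 0 ≤ x → wp p x * |Delta2 c f x| ≤ 4 * M := by
      intro c hc hch x hx
      have w0 : 0 ≤ wp p x := (wp_pos hx).le
      have a1 : wp p x * |f (x + 2*c)| ≤ M := hMb (2*c) x (by linarith) (by linarith) hx
      have a2 : wp p x * |f (x + c)| ≤ M := hMb c x hc (by linarith) hx
      have a3 : wp p x * |f x| ≤ M := by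
        have := hMb 0 x le_rfl (by linarith) hx
        rwa [add_zero] at this
      have tri : |Delta2 c f x| ≤ |f (x + 2*c)| + 2 * |f (x + c)| + |f x| := by
        unfold Delta2
        calc |f (x + 2*c) - 2 * f (x + c) + f x|
            ≤ |f (x + 2*c) - 2 * f (x + c)| + |f x| := abs_add_le _ _
          _ ≤ |f (x + 2*c)| + |2 * f (x + c)| + |f x| := by
              linarith [abs_sub (f (x + 2*c)) (2 * f (x + c))]
          _ = |f (x + 2*c)| + 2 * |f (x + c)| + |f x| := by rw [abs_mul, abs_two]
      nlinarith [mul_le_mul_of_nonneg_left tri w0]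
    have bdd1 : ∀ c : ℝ, 0 ≤ c → c ≤ h →
        BddAbove (Set.range fun x : {x : ℝ // 0 ≤ x} => wp p x.1 * |Delta2 c f x.1|) :=
      fun c hc hch => ⟨4 * M, by rintro v ⟨⟨y, hy⟩, rfl⟩; exact hDb c hc hch y hy⟩
    have hpn : ∀ c : ℝ, 0 ≤ c → c ≤ h → pNorm p (Delta2 c f) ≤ 4 * M :=
      fun c hc hch => ciSup_le fun x => hDb c hc hch x.1 x.2
    have homega : ∀ c : ℝ, 0 < c → c ≤ h → pNorm p (Delta2 c f) ≤ omega2 p f h := by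
      intro c hc hch
      haveI : Nonempty {h' : ℝ // 0 < h' ∧ h' ≤ h} := ⟨⟨h, hh, le_rfl⟩⟩
      exact le_ciSup (f := fun h' : {h' : ℝ // 0 < h' ∧ h' ≤ h} => pNorm p (Delta2 h'.1 f))
        ⟨4 * M, by rintro v ⟨⟨c', hc'⟩, rfl⟩; exact hpn c' hc'.1.le hc'.2⟩ ⟨c, hc, hch⟩
    have N1 := homega (h/2) (by positivity) (by linarith)
    have N2 := homega h hh le_rfl
    have key : ∀ x : ℝ, 0 ≤ x →
        wp p x * |1 / h ^ 2 * (8 * Delta2 (h / 2) f x - Delta2 h f x)| ≤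
          9 / h ^ 2 * omega2 p f h := by
      intro x hx
      have w0 : 0 ≤ wp p x := (wp_pos hx).le
      have b1 : wp p x * |Delta2 (h/2) f x| ≤ pNorm p (Delta2 (h/2) f) :=
        le_ciSup (bdd1 (h/2) (by positivity) (by linarith)) (⟨x, hx⟩ : {x : ℝ // 0 ≤ x})
      have b2 : wp p x * |Delta2 h f x| ≤ pNorm p (Delta2 h f) :=
        le_ciSup (bdd1 h hh.le le_rfl) (⟨x, hx⟩ : {x : ℝ // 0 ≤ x})
      have habs : |1 / h ^ 2 * (8 * Delta2 (h / 2) f x - Delta2 h f x)| ≤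
          1 / h ^ 2 * (8 * |Delta2 (h/2) f x| + |Delta2 h f x|) := by
        rw [abs_mul, abs_of_pos (by positivity : (0:ℝ) < 1 / h ^ 2)]
        apply mul_le_mul_of_nonneg_left _ (by positivity)
        calc |8 * Delta2 (h/2) f x - Delta2 h f x|
            ≤ |8 * Delta2 (h/2) f x| + |Delta2 h f x| := abs_sub _ _
          _ = 8 * |Delta2 (h/2) f x| + |Delta2 h f x| := by
              rw [abs_mul]; norm_num
      calc wp p x * |1 / h ^ 2 * (8 * Delta2 (h / 2) f x - Delta2 h f x)|
          ≤ wp p x * (1 / h ^ 2 * (8 * |Delta2 (h/2) f x| + |Delta2 h f x|)) :=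
            mul_le_mul_of_nonneg_left habs w0
        _ = 1 / h ^ 2 * (8 * (wp p x * |Delta2 (h/2) f x|) + wp p x * |Delta2 h f x|) := by
            ring
        _ ≤ 1 / h ^ 2 * (8 * omega2 p f h + omega2 p f h) := by
            have c1 := le_trans b1 N1
            have c2 := le_trans b2 N2
            apply mul_le_mul_of_nonneg_left _ (by positivity)
            linarith
        _ = 9 / h ^ 2 * omega2 p f h := by ring
    exact ciSup_le fun x => key x.1 x.2
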